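/- Let i be a nonzero integer, let T and T' be finitely generated abelian groups, and let N : T → T' be a homomorphism. Set D = T ⊗_ℤ K₀ and D' = T' ⊗_ℤ K₀, with σ acting as 1⊗σ and N extended K₀-linearly. Then for every pair (x,y) ∈ D ⊕ D' with N(x) = (pⁱσ − 1)(y), there exists a unique z ∈ D with x = (pⁱσ − 1)(z) and y = N(z). -/

import Mathlib

open TensorProduct

/-- `K₀`: the fraction field of the ring of `p`-typical Witt vectors of the finite
field `𝔽_q` with `q = p^f` elements. -/
abbrev K0 (p f : ℕ) [Fact p.Prime] : Type :=
  FractionRing (WittVector p (GaloisField p f))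

/-- `ℚ_p`, realized as the fraction field of `W(𝔽_p)`. -/
abbrev Qp (p : ℕ) [Fact p.Prime] : Type :=
  FractionRing (WittVector p (ZMod p))

/-- The Frobenius `σ` of `K₀`, induced by the Witt vector Frobenius of `W(𝔽_q)`. -/
noncomputable def sigma (p f : ℕ) [Fact p.Prime] : K0 p f ≃+* K0 p f :=
  WittVector.FractionRing.frobenius p (GaloisField p f)

/-- The embedding `ℚ_p → K₀` induced by `W(𝔽_p) → W(𝔽_q)`. -/
noncomputable def iota (p f : ℕ) [Fact p.Prime] : Qp p →+* K0 p f :=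
  IsFractionRing.lift
    (g := (algebraMap (WittVector p (GaloisField p f)) (K0 p f)).comp
      (WittVector.map (algebraMap (ZMod p) (GaloisField p f))))
    (by
      rw [RingHom.coe_comp]
      exact Function.Injective.comp (IsFractionRing.injective _ _)
        (WittVector.map_injective _ (RingHom.injective _)))

/-- `σ` as a `ℤ`-linear endomorphism of `K₀`. -/
noncomputable def sigmaLin (p f : ℕ) [Fact p.Prime] : K0 p f →ₗ[ℤ] K0 p f :=
  AddMonoidHom.toIntLinearMap (sigma p f).toRingHom.toAddMonoidHom

/-- `ι : ℚ_p → K₀` as a `ℤ`-linear map. -/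
noncomputable def iotaLin (p f : ℕ) [Fact p.Prime] : Qp p →ₗ[ℤ] K0 p f :=
  AddMonoidHom.toIntLinearMap (iota p f).toAddMonoidHom

/-- The `ℤ`-linear endomorphism `a ↦ pⁱ·σ(a)` of `K₀` (with `pⁱ ∈ K₀` the `zpow`). -/
noncomputable def twist (p f : ℕ) [Fact p.Prime] (i : ℤ) : K0 p f →ₗ[ℤ] K0 p f :=
  ((p : K0 p f) ^ i) • sigmaLin p f

section Aux

variable (p f : ℕ) [Fact p.Prime]

/-- Iterates of `σ` as ring equivalences. -/
noncomputable def sigmaPow : ℕ → (K0 p f ≃+* K0 p f)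
  | 0 => RingEquiv.refl _
  | n + 1 => (sigma p f).trans (sigmaPow n)

lemma sigmaPow_succ_apply (n : ℕ) (a : K0 p f) :
    sigmaPow p f (n + 1) a = sigmaPow p f n (sigma p f a) := rfl

lemma frob_iter_eq_id (hf : f ≠ 0) (x : WittVector p (GaloisField p f)) :
    (⇑(WittVector.frobeniusEquiv p (GaloisField p f)))^[f] x = x := by
  have hco : ⇑(WittVector.frobeniusEquiv p (GaloisField p f))
      = ⇑(WittVector.frobenius : WittVector p (GaloisField p f) →+* _) := by
    funext y
    simp
  rw [hco]
  have hcoeff : ∀ (n : ℕ) (x : WittVector p (GaloisField p f)) (j : ℕ),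
      ((⇑(WittVector.frobenius : WittVector p (GaloisField p f) →+* _))^[n] x).coeff j
        = x.coeff j ^ p ^ n := by
    intro n
    induction n with
    | zero => intro x j; simp
    | succ n ih =>
      intro x j
      rw [Function.iterate_succ', Function.comp_apply,
        WittVector.coeff_frobenius_charP, ih, ← pow_mul, pow_succ]
  ext j
  rw [hcoeff]
  letI : Fintype (GaloisField p f) := Fintype.ofFinite _
  rw [show p ^ f = Fintype.card (GaloisField p f) by
    rw [← Nat.card_eq_fintype_card, GaloisField.card p f hf]]
  exact FiniteField.pow_card _

lemma sigmaPow_algebraMap (n : ℕ) (x : WittVector p (GaloisField p f)) :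
    sigmaPow p f n (algebraMap (WittVector p (GaloisField p f)) (K0 p f) x)
      = algebraMap (WittVector p (GaloisField p f)) (K0 p f)
          ((⇑(WittVector.frobeniusEquiv p (GaloisField p f)))^[n] x) := by
  induction n generalizing x with
  | zero => rfl
  | succ n ih =>
    rw [sigmaPow_succ_apply]
    rw [show sigma p f (algebraMap _ (K0 p f) x)
        = algebraMap _ (K0 p f) (WittVector.frobeniusEquiv p (GaloisField p f) x) from
      IsFractionRing.ringEquivOfRingEquiv_algebraMap _ _]
    rw [ih, Function.iterate_succ_apply]

lemma sigmaPow_f_eq (hf : f ≠ 0) (a : K0 p f) : sigmaPow p f f a = a := by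
  have h : ((sigmaPow p f f : K0 p f ≃+* K0 p f) : K0 p f →+* K0 p f)
      = RingHom.id (K0 p f) := by
    apply IsLocalization.ringHom_ext (nonZeroDivisors (WittVector p (GaloisField p f)))
    ext x
    simp only [RingHom.comp_apply, RingHom.id_apply, RingEquiv.coe_toRingHom]
    rw [sigmaPow_algebraMap, frob_iter_eq_id p f hf]
  exact RingHom.congr_fun h a

lemma p_zpow_ne_one (m : ℤ) (hm : m ≠ 0) : ((p : K0 p f) ^ m : K0 p f) ≠ 1 := by
  intro h
  have hnat : ((p : K0 p f)) ^ (m.natAbs : ℕ) = 1 := by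
    rcases Int.natAbs_eq m with h' | h'
    · rw [← zpow_natCast, ← h', h]
    · rw [← zpow_natCast, ← neg_neg (m.natAbs : ℤ), ← h', zpow_neg, h, inv_one]
  have hW : ((p : WittVector p (GaloisField p f))) ^ m.natAbs = 1 := by
    apply IsFractionRing.injective (WittVector p (GaloisField p f)) (K0 p f)
    rw [map_pow, map_natCast, map_one]
    exact hnat
  exact (WittVector.irreducible p
    (k := GaloisField p f)).not_isUnit
    (IsUnit.of_pow_eq_one hW (Int.natAbs_ne_zero.mpr hm))

lemma twist_apply (i : ℤ) (a : K0 p f) :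
    twist p f i a = (p : K0 p f) ^ i * sigma p f a := by
  simp [twist, sigmaLin, smul_eq_mul]

lemma sigmaPow_p (n : ℕ) : sigmaPow p f n (p : K0 p f) = (p : K0 p f) :=
  map_natCast (sigmaPow p f n : K0 p f →+* K0 p f) p

lemma twist_pow_apply (i : ℤ) (n : ℕ) (a : K0 p f) :
    ((twist p f i) ^ n) a = (p : K0 p f) ^ (i * (n : ℤ)) * (sigmaPow p f n a) := by
  have hp0 : (p : K0 p f) ≠ 0 := WittVector.FractionRing.p_nonzero p _
  induction n generalizing a with
  | zero => simp [sigmaPow]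
  | succ n ih =>
    rw [pow_succ, Module.End.mul_apply, twist_apply, ih, map_mul, map_zpow₀, sigmaPow_p,
      ← sigmaPow_succ_apply, ← mul_assoc, ← zpow_add₀ hp0]
    congr 2
    push_cast
    ring

lemma L_bijective (hf : f ≠ 0) (i : ℤ) (hi : i ≠ 0) :
    Function.Bijective (twist p f i - LinearMap.id : K0 p f →ₗ[ℤ] K0 p f) := by
  have hp0 : (p : K0 p f) ≠ 0 := WittVector.FractionRing.p_nonzero p _
  have hc : ((p : K0 p f) ^ (i * (f : ℤ)) : K0 p f) ≠ 1 :=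
    p_zpow_ne_one p f _ (mul_ne_zero hi (Int.natCast_ne_zero.mpr hf))
  have hc1 : ((p : K0 p f) ^ (i * (f : ℤ)) : K0 p f) - 1 ≠ 0 := sub_ne_zero.mpr hc
  have hAf : ∀ a : K0 p f, ((twist p f i) ^ f) a = (p : K0 p f) ^ (i * (f : ℤ)) * a := by
    intro a; rw [twist_pow_apply, sigmaPow_f_eq p f hf]
  have hgeom : ∀ a : K0 p f,
      (∑ j ∈ Finset.range f, (twist p f i) ^ j) (twist p f i a - a)
        = ((p : K0 p f) ^ (i * (f : ℤ)) - 1) * a := by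
    intro a
    have h := congrArg (fun F : Module.End ℤ (K0 p f) => F a) (geom_sum_mul (twist p f i) f)
    simp only [Module.End.mul_apply, LinearMap.sub_apply, Module.End.one_apply] at h
    rw [h, hAf, sub_mul, one_mul]
  have hgeom' : ∀ a : K0 p f,
      twist p f i ((∑ j ∈ Finset.range f, (twist p f i) ^ j) a)
          - (∑ j ∈ Finset.range f, (twist p f i) ^ j) a
        = ((p : K0 p f) ^ (i * (f : ℤ)) - 1) * a := by
    intro a
    have h := congrArg (fun F : Module.End ℤ (K0 p f) => F a) (mul_geom_sum (twist p f i) f)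
    simp only [Module.End.mul_apply, LinearMap.sub_apply, Module.End.one_apply] at h
    rw [h, hAf, sub_mul, one_mul]
  constructor
  · intro a b hab
    simp only [LinearMap.sub_apply, LinearMap.id_apply] at hab
    have h0 : twist p f i (a - b) - (a - b) = 0 := by
      rw [map_sub]; linear_combination hab
    have h2 : ((p : K0 p f) ^ (i * (f : ℤ)) - 1) * (a - b) = 0 := by
      rw [← hgeom (a - b), h0, map_zero]
    exact sub_eq_zero.mp ((mul_eq_zero.mp h2).resolve_left hc1)
  · intro b
    set e : K0 p f := (((p : K0 p f) ^ (i * (f : ℤ))) - 1)⁻¹ with hedef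
    have hσe : sigma p f e = e := by
      rw [hedef, map_inv₀, map_sub, map_zpow₀, map_natCast, map_one]
    set S : K0 p f := (∑ j ∈ Finset.range f, (twist p f i) ^ j) b with hSdef
    refine ⟨e * S, ?_⟩
    simp only [LinearMap.sub_apply, LinearMap.id_apply]
    rw [twist_apply, map_mul, hσe]
    have h3 : (p : K0 p f) ^ i * (e * sigma p f S) - e * S
        = e * (twist p f i S - S) := by
      rw [twist_apply]; ring
    rw [h3, hSdef, hgeom', ← mul_assoc, hedef, inv_mul_cancel₀ hc1, one_mul]

end Aux

/-- for a nonzero integer `i`, finitely generated abelian groups `T, T'` and a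
homomorphism `N : T → T'`, every pair `(x,y) ∈ D ⊕ D'` with `N(x) = (pⁱσ − 1)(y)` is of the
form `((pⁱσ − 1)(z), N(z))` for a unique `z ∈ D`. -/
theorem coboundary_unique (p f : ℕ) [Fact p.Prime] (hf : f ≠ 0) (i : ℤ) (hi : i ≠ 0)
    (T T' : Type) [AddCommGroup T] [AddCommGroup T']
    [AddGroup.FG T] [AddGroup.FG T'] (N : T →+ T') :
    ∀ (x : T ⊗[ℤ] K0 p f) (y : T' ⊗[ℤ] K0 p f),
      TensorProduct.map N.toIntLinearMap (LinearMap.id : K0 p f →ₗ[ℤ] K0 p f) x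
        = TensorProduct.map (LinearMap.id : T' →ₗ[ℤ] T') (twist p f i) y - y →
      ∃! z : T ⊗[ℤ] K0 p f,
        x = TensorProduct.map (LinearMap.id : T →ₗ[ℤ] T) (twist p f i) z - z ∧
        y = TensorProduct.map N.toIntLinearMap (LinearMap.id : K0 p f →ₗ[ℤ] K0 p f) z := by
  intro x y hxy
  classical
  set L : K0 p f →ₗ[ℤ] K0 p f := twist p f i - LinearMap.id with hL
  have hLbij : Function.Bijective L := L_bijective p f hf i hi
  let E : K0 p f ≃ₗ[ℤ] K0 p f := LinearEquiv.ofBijective L hLbij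
  let ET : (T ⊗[ℤ] K0 p f) ≃ₗ[ℤ] (T ⊗[ℤ] K0 p f) :=
    TensorProduct.congr (LinearEquiv.refl ℤ T) E
  let ET' : (T' ⊗[ℤ] K0 p f) ≃ₗ[ℤ] (T' ⊗[ℤ] K0 p f) :=
    TensorProduct.congr (LinearEquiv.refl ℤ T') E
  have hET : ∀ w : T ⊗[ℤ] K0 p f, ET w = LinearMap.lTensor T L w := by
    intro w
    induction w using TensorProduct.induction_on with
    | zero => simp
    | tmul t a => simp [ET, E, LinearMap.lTensor_tmul]; rfl
    | add u v hu hv => simp [map_add, hu, hv]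
  have hET' : ∀ w : T' ⊗[ℤ] K0 p f, ET' w = LinearMap.lTensor T' L w := by
    intro w
    induction w using TensorProduct.induction_on with
    | zero => simp
    | tmul t a => simp [ET', E, LinearMap.lTensor_tmul]; rfl
    | add u v hu hv => simp [map_add, hu, hv]
  have hform : ∀ w : T ⊗[ℤ] K0 p f,
      TensorProduct.map (LinearMap.id : T →ₗ[ℤ] T) (twist p f i) w - w
        = ET w := by
    intro w
    rw [hET]
    have : LinearMap.lTensor T L = LinearMap.lTensor T (twist p f i) - LinearMap.id := by
      rw [hL, LinearMap.lTensor_sub, LinearMap.lTensor_id]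
    rw [this]
    rfl
  have hform' : ∀ w : T' ⊗[ℤ] K0 p f,
      TensorProduct.map (LinearMap.id : T' →ₗ[ℤ] T') (twist p f i) w - w
        = ET' w := by
    intro w
    rw [hET']
    have : LinearMap.lTensor T' L = LinearMap.lTensor T' (twist p f i) - LinearMap.id := by
      rw [hL, LinearMap.lTensor_sub, LinearMap.lTensor_id]
    rw [this]
    rfl
  have hcomm : ∀ w : T ⊗[ℤ] K0 p f,
      TensorProduct.map N.toIntLinearMap (LinearMap.id : K0 p f →ₗ[ℤ] K0 p f) (ET w)
        = ET' (TensorProduct.map N.toIntLinearMap (LinearMap.id : K0 p f →ₗ[ℤ] K0 p f) w) := by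
    intro w
    rw [hET, hET']
    induction w using TensorProduct.induction_on with
    | zero => simp
    | tmul t a => simp [LinearMap.lTensor_tmul]
    | add u v hu hv => simp [map_add, hu, hv]
  refine ⟨ET.symm x, ⟨?_, ?_⟩, ?_⟩
  · rw [hform, ET.apply_symm_apply]
  · apply ET'.injective
    rw [← hcomm, ET.apply_symm_apply, ← hform']
    exact hxy.symm
  · rintro w ⟨hw1, hw2⟩
    apply ET.injective
    rw [ET.apply_symm_apply, hw1, hform]
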